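/- Let k ≥ 1 and n = 2k+1, and let C be a 2k × k (0,1)-matrix all of whose row sums equal 1 and all of whose column sums equal 2. Define the n × n (0,1)-matrix A_C by: the submatrix of A_C on rows 1,…,2k and columns 1,…,k equals C; the submatrix on rows 2,…,2k+1 and columns k+1,…,2k equals C* (the conjugate of C); the (1,n)-entry and the (n,n)-entry equal 1; and all other entries equal 0. Then A_C ∈ A(n,2) and ν(A_C) = k(4k−1). -/

import Mathlib

open Finset

/-- A matrix of zeros and ones. -/
def ZeroOne {m n : ℕ} (A : Matrix (Fin m) (Fin n) ℕ) : Prop :=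
  ∀ i j, A i j = 0 ∨ A i j = 1

/-- Sum of the entries of row `i`. -/
def rowSum {m n : ℕ} (A : Matrix (Fin m) (Fin n) ℕ) (i : Fin m) : ℕ :=
  ∑ j, A i j

/-- Sum of the entries of column `j`. -/
def colSum {m n : ℕ} (A : Matrix (Fin m) (Fin n) ℕ) (j : Fin n) : ℕ :=
  ∑ i, A i j

/-- The class `A(R,S)` of (0,1)-matrices with row sum vector `R` and
column sum vector `S`. -/
def classRS {m n : ℕ} (R : Fin m → ℕ) (S : Fin n → ℕ) :
    Set (Matrix (Fin m) (Fin n) ℕ) :=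
  {A | ZeroOne A ∧ (∀ i, rowSum A i = R i) ∧ (∀ j, colSum A j = S j)}

/-- The class `A(n,k)` of square (0,1)-matrices of order `n` with all row
and column sums equal to `k`. -/
def classA (n k : ℕ) : Set (Matrix (Fin n) (Fin n) ℕ) :=
  classRS (fun _ => k) (fun _ => k)

/-- `sigmaM A i j` is the sum of the entries of the leading submatrix of `A`
on rows `0,…,i` and columns `0,…,j` (0-based), i.e. `σ_{i+1,j+1}(A)` in
1-based notation. -/
def sigmaM {m n : ℕ} (A : Matrix (Fin m) (Fin n) ℕ) (i : Fin m) (j : Fin n) : ℕ :=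
  ∑ k ∈ Finset.univ.filter (fun k : Fin m => k ≤ i),
    ∑ l ∈ Finset.univ.filter (fun l : Fin n => l ≤ j), A k l

/-- The Bruhat order: `A ⪯_B C` iff `σ_{ij}(A) ≥ σ_{ij}(C)` for all `i, j`. -/
def brle {m n : ℕ} (A C : Matrix (Fin m) (Fin n) ℕ) : Prop :=
  ∀ i j, sigmaM C i j ≤ sigmaM A i j

/-- Incomparability in the Bruhat order. -/
def Incomp {m n : ℕ} (A C : Matrix (Fin m) (Fin n) ℕ) : Prop :=
  ¬ brle A C ∧ ¬ brle C A

/-- A set of matrices that is an antichain in the Bruhat order. -/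
def IsAntichainB {m n : ℕ} (D : Set (Matrix (Fin m) (Fin n) ℕ)) : Prop :=
  ∀ A ∈ D, ∀ C ∈ D, A ≠ C → Incomp A C

/-- The number of inversions of a (0,1)-matrix: pairs of `1` entries, one of
which is strictly to the top-right of the other (each unordered pair counted
once, via the representative whose first member is in the lower-indexed row). -/
def nu {m n : ℕ} (A : Matrix (Fin m) (Fin n) ℕ) : ℕ :=
  (Finset.univ.filter (fun p : (Fin m × Fin n) × (Fin m × Fin n) =>
      p.1.1 < p.2.1 ∧ p.2.2 < p.1.2 ∧ A p.1.1 p.1.2 = 1 ∧ A p.2.1 p.2.2 = 1)).card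

/-- The conjugate of a matrix: columns in reversed (left-right flipped) order. -/
def conjM {m n : ℕ} (A : Matrix (Fin m) (Fin n) ℕ) : Matrix (Fin m) (Fin n) ℕ :=
  Matrix.of fun i j => A i j.rev

private lemma pick1 {n : ℕ} (x : ℕ) (hx : x < n) :
    (∑ j : Fin n, if (j : ℕ) = x then 1 else 0) = 1 := by
  rw [Finset.sum_eq_single (⟨x, hx⟩ : Fin n)]
  · simp
  · intro b _ hb
    rw [if_neg]
    intro h; exact hb (Fin.ext h)
  · simp

private lemma pick2 {n : ℕ} (P : Prop) [Decidable P] (x y : ℕ) (hx : x < n) (hy : y < n) :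
    (∑ j1 : Fin n, ∑ j2 : Fin n,
        if P ∧ (j2 : ℕ) < (j1 : ℕ) ∧ (j1 : ℕ) = x ∧ (j2 : ℕ) = y then 1 else 0)
      = if P ∧ y < x then 1 else 0 := by
  rw [Finset.sum_eq_single (⟨x, hx⟩ : Fin n)]
  · rw [Finset.sum_eq_single (⟨y, hy⟩ : Fin n)]
    · have h : (P ∧ ((⟨y, hy⟩ : Fin n) : ℕ) < ((⟨x, hx⟩ : Fin n) : ℕ) ∧
          ((⟨x, hx⟩ : Fin n) : ℕ) = x ∧ ((⟨y, hy⟩ : Fin n) : ℕ) = y) ↔ (P ∧ y < x) := by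
        simp
      simp only [h]
      simp
    · intro b _ hb
      rw [if_neg]
      rintro ⟨-, -, -, h⟩; exact hb (Fin.ext h)
    · simp
  · intro b _ hb
    apply Finset.sum_eq_zero
    intro j2 _
    rw [if_neg]
    rintro ⟨-, -, h, -⟩; exact hb (Fin.ext h)
  · simp

private lemma ite_split4 (P Q a b c' d' : Prop) [Decidable P] [Decidable Q]
    [Decidable a] [Decidable b] [Decidable c'] [Decidable d']
    (hab : ¬(a ∧ b)) (hcd : ¬(c' ∧ d')) :
    (if P ∧ Q ∧ (a ∨ b) ∧ (c' ∨ d') then 1 else 0 : ℕ) =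
      ((if P ∧ Q ∧ a ∧ c' then 1 else 0) + (if P ∧ Q ∧ a ∧ d' then 1 else 0))
      + ((if P ∧ Q ∧ b ∧ c' then 1 else 0) + (if P ∧ Q ∧ b ∧ d' then 1 else 0)) := by
  by_cases hP : P <;> by_cases hQ : Q <;> by_cases ha : a <;> by_cases hb : b <;>
    by_cases hc : c' <;> by_cases hd : d' <;> simp_all

private lemma fin2range (n : ℕ) (g : ℕ → ℕ → ℕ) :
    (∑ i : Fin n, ∑ j : Fin n, g i j) = ∑ a ∈ Finset.range n, ∑ b ∈ Finset.range n, g a b := by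
  rw [Fin.sum_univ_eq_sum_range (fun a => ∑ j : Fin n, g a j)]
  exact Finset.sum_congr rfl fun a _ => Fin.sum_univ_eq_sum_range (g a) n


private def cF (k : ℕ) (G : ℕ → ℕ) (i : ℕ) : ℕ :=
  if i < 2*k then G i else 2*k - 1 - G (2*k - 1)

private def dF (k : ℕ) (G : ℕ → ℕ) (i : ℕ) : ℕ :=
  if i = 0 then 2*k else if i < 2*k then 2*k - 1 - G (i-1) else 2*k

section bounds
variable {k : ℕ} {G : ℕ → ℕ} (hk : 1 ≤ k) (hG : ∀ i, i < 2*k → G i < k)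

private lemma cF_lt (i : ℕ) (hi : i < 2*k) : cF k G i = G i := if_pos hi

private lemma cF_top : cF k G (2*k) = 2*k - 1 - G (2*k-1) := if_neg (lt_irrefl _)

include hG hk in
private lemma cF_le (i : ℕ) : cF k G i ≤ 2*k - 1 := by
  unfold cF
  split
  · have := hG i (by assumption); omega
  · omega

include hG hk in
private lemma cF_top_ge : k ≤ cF k G (2*k) := by
  rw [cF_top]
  have := hG (2*k-1) (by omega)
  omega

include hG hk in
private lemma dF_ge (i : ℕ) : k ≤ dF k G i := by
  unfold dF
  split
  · omega
  · split
    · have := hG (i-1) (by omega); omega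
    · omega

private lemma dF_le (i : ℕ) : dF k G i ≤ 2*k := by
  unfold dF
  split
  · omega
  · split <;> omega

include hG hk in
private lemma cF_lt_dF (i : ℕ) : cF k G i < dF k G i := by
  have h1 := cF_le hk hG (i := i)
  have h2 := dF_ge hk hG (i := i)
  rcases lt_or_ge i (2*k) with h | h
  · rw [cF_lt i h]
    have := hG i h
    omega
  · have : dF k G i = 2*k := by unfold dF; split <;> [omega; (split <;> omega)]
    omega

private lemma dF_zero : dF k G 0 = 2*k := by simp [dF]

omit hk in
private lemma dF_mid (i : ℕ) (h1 : 1 ≤ i) (h2 : i < 2*k) : dF k G i = 2*k - 1 - G (i-1) := by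
  unfold dF
  rw [if_neg (by omega), if_pos h2]

include hk in
private lemma dF_top : dF k G (2*k) = 2*k := by
  unfold dF
  rw [if_neg (by omega), if_neg (by omega)]

end bounds

private lemma gaussPairs (N : ℕ) :
    (∑ a ∈ range N, ∑ b ∈ range N, if a < b then 1 else 0) * 2 = N * (N-1) := by
  induction N with
  | zero => simp
  | succ n ih =>
    rw [Finset.sum_range_succ]
    have h1 : (∑ b ∈ range (n+1), if n < b then (1:ℕ) else 0) = 0 :=
      Finset.sum_eq_zero fun b hb => by rw [mem_range] at hb; rw [if_neg]; omega
    have h2 : ∀ a ∈ range n, (∑ b ∈ range (n+1), if a < b then (1:ℕ) else 0)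
        = (∑ b ∈ range n, if a < b then 1 else 0) + 1 := by
      intro a ha
      rw [Finset.sum_range_succ, if_pos (mem_range.mp ha)]
    rw [Finset.sum_congr rfl h2, Finset.sum_add_distrib, Finset.sum_const, h1]
    simp only [smul_eq_mul, mul_one, card_range, add_zero]
    have key : (n+1)*(n+1-1) = n*(n-1)+2*n := by
      cases n with
      | zero => rfl
      | succ m => simp only [Nat.succ_sub_one]; ring
    omega

private lemma shrink {M N : ℕ} (h : M ≤ N) (p : ℕ → Prop) [DecidablePred p] :
    (∑ u ∈ range N, if u < M ∧ p u then (1:ℕ) else 0) = ∑ u ∈ range M, if p u then 1 else 0 := by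
  rw [← Finset.sum_subset (Finset.range_subset_range.mpr h)
      (fun x _ hx => if_neg (fun hc => hx (mem_range.mpr hc.1)))]
  exact Finset.sum_congr rfl fun u hu => if_congr (and_iff_right (mem_range.mp hu)) rfl rfl

private lemma Efib (k : ℕ) (G : ℕ → ℕ) (hG : ∀ i, i < 2*k → G i < k)
    (hfib : ∀ w, w < k → (∑ i ∈ range (2*k), if G i = w then 1 else 0) = 2) :
    (∑ a ∈ range (2*k), ∑ b ∈ range (2*k), if a < b ∧ G a = G b then (1:ℕ) else 0) = k := by
  have step1 : ∀ a ∈ range (2*k), ∀ b ∈ range (2*k),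
      (if a < b ∧ G a = G b then (1:ℕ) else 0)
        = ∑ w ∈ range k, if a < b ∧ G a = w ∧ G b = w then 1 else 0 := by
    intro a ha b hb
    by_cases h : a < b ∧ G a = G b
    · rw [if_pos h]
      have e : ∀ w ∈ range k, (if a < b ∧ G a = w ∧ G b = w then (1:ℕ) else 0)
          = if G a = w then 1 else 0 := by
        intro w _
        refine if_congr ?_ rfl rfl
        constructor
        · rintro ⟨-, h1, -⟩; exact h1
        · intro h1; exact ⟨h.1, h1, h.2 ▸ h1⟩
      rw [Finset.sum_congr rfl e, Finset.sum_ite_eq]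
      rw [if_pos (mem_range.mpr (hG a (mem_range.mp ha)))]
    · rw [if_neg h]
      exact (Finset.sum_eq_zero fun w _ => by
        rw [if_neg]; rintro ⟨h1, h2, h3⟩; exact h ⟨h1, by omega⟩).symm
  rw [Finset.sum_congr rfl (fun a ha => Finset.sum_congr rfl (fun b hb => step1 a ha b hb))]
  rw [Finset.sum_congr rfl (fun a _ => Finset.sum_comm), Finset.sum_comm]
  have inner : ∀ w ∈ range k,
      (∑ a ∈ range (2*k), ∑ b ∈ range (2*k), if a < b ∧ G a = w ∧ G b = w then (1:ℕ) else 0) = 1 := by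
    intro w hw
    rw [mem_range] at hw
    have hF : (Finset.filter (fun i => G i = w) (range (2*k))).card = 2 := by
      rw [Finset.card_filter]; exact hfib w hw
    obtain ⟨x, y, hxy, hFxy⟩ := Finset.card_eq_two.mp hF
    have e1 : ∀ a ∈ range (2*k), (∑ b ∈ range (2*k), if a < b ∧ G a = w ∧ G b = w then (1:ℕ) else 0)
        = if G a = w then (∑ b ∈ range (2*k), if G b = w then (if a < b then (1:ℕ) else 0) else 0) else 0 := by
      intro a _
      by_cases h : G a = w
      · rw [if_pos h]
        exact Finset.sum_congr rfl fun b _ => by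
          by_cases h2 : G b = w <;> by_cases h3 : a < b <;> simp [h, h2, h3]
      · rw [if_neg h]
        exact Finset.sum_eq_zero fun b _ => by simp [h]
    rw [Finset.sum_congr rfl e1, ← Finset.sum_filter, hFxy]
    have e2 : ∀ a : ℕ, (∑ b ∈ range (2*k), if G b = w then (if a < b then (1:ℕ) else 0) else 0)
        = (if a < x then 1 else 0) + if a < y then 1 else 0 := by
      intro a
      rw [← Finset.sum_filter, hFxy, Finset.sum_pair hxy]
    rw [Finset.sum_pair hxy, e2, e2]
    have hne : x ≠ y := hxy
    split_ifs <;> omega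
  rw [Finset.sum_congr rfl inner, Finset.sum_const, card_range, smul_eq_mul, mul_one]

private lemma PQE (k : ℕ) (G : ℕ → ℕ) :
    (∑ a ∈ range (2*k), ∑ b ∈ range (2*k), if a < b then (1:ℕ) else 0)
      = ((∑ a ∈ range (2*k), ∑ b ∈ range (2*k), if a < b ∧ G a < G b then 1 else 0)
        + (∑ a ∈ range (2*k), ∑ b ∈ range (2*k), if a < b ∧ G b < G a then 1 else 0))
        + (∑ a ∈ range (2*k), ∑ b ∈ range (2*k), if a < b ∧ G a = G b then 1 else 0) := by
  rw [← Finset.sum_add_distrib, ← Finset.sum_add_distrib]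
  refine Finset.sum_congr rfl fun a _ => ?_
  rw [← Finset.sum_add_distrib, ← Finset.sum_add_distrib]
  refine Finset.sum_congr rfl fun b _ => ?_
  split_ifs <;> omega

private lemma S2lem (k : ℕ) (hk : 1 ≤ k) (G : ℕ → ℕ) (hG : ∀ i, i < 2*k → G i < k) :
    (∑ a ∈ range (2*k+1), ∑ b ∈ range (2*k+1),
      if a < b ∧ dF k G b < cF k G a then (1:ℕ) else 0) = 0 := by
  refine Finset.sum_eq_zero fun a ha => Finset.sum_eq_zero fun b hb => ?_
  rw [mem_range] at ha hb
  rw [if_neg]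
  rintro ⟨h1, h2⟩
  have ha2 : a < 2*k := by omega
  rw [cF_lt a ha2] at h2
  have := hG a ha2
  have := dF_ge hk hG (G := G) b
  omega

private lemma S1lem (k : ℕ) (hk : 1 ≤ k) (G : ℕ → ℕ) (hG : ∀ i, i < 2*k → G i < k) :
    (∑ a ∈ range (2*k+1), ∑ b ∈ range (2*k+1), if a < b ∧ cF k G b < cF k G a then (1:ℕ) else 0)
      = ∑ a ∈ range (2*k), ∑ b ∈ range (2*k), if a < b ∧ G b < G a then 1 else 0 := by
  simp only [Finset.sum_range_succ]
  rw [Finset.sum_add_distrib]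
  have h1 : (∑ a ∈ range (2*k), if a < 2*k ∧ cF k G (2*k) < cF k G a then (1:ℕ) else 0) = 0 := by
    refine Finset.sum_eq_zero fun a ha => ?_
    rw [mem_range] at ha
    rw [if_neg]
    rintro ⟨-, hlt⟩
    have h2 := cF_top_ge hk hG
    rw [cF_lt a ha] at hlt
    have := hG a ha
    omega
  have h2 : (∑ b ∈ range (2*k), if 2*k < b ∧ cF k G b < cF k G (2*k) then (1:ℕ) else 0) = 0 :=
    Finset.sum_eq_zero fun b hb => by rw [mem_range] at hb; rw [if_neg]; omega
  rw [h1, h2, if_neg (by omega : ¬(2*k < 2*k ∧ cF k G (2*k) < cF k G (2*k)))]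
  simp only [add_zero]
  refine Finset.sum_congr rfl fun a ha => Finset.sum_congr rfl fun b hb => ?_
  rw [mem_range] at ha hb
  rw [cF_lt a ha, cF_lt b hb]

private lemma S3lem (k : ℕ) (hk : 1 ≤ k) (G : ℕ → ℕ) (hG : ∀ i, i < 2*k → G i < k) :
    (∑ a ∈ range (2*k+1), ∑ b ∈ range (2*k+1), if a < b ∧ cF k G b < dF k G a then (1:ℕ) else 0)
      = k*(2*k-1) + 1 + ∑ u ∈ range (2*k-1), if G u < G (2*k-1) then 1 else 0 := by
  simp only [Finset.sum_range_succ]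
  rw [Finset.sum_add_distrib]
  have h2 : (∑ b ∈ range (2*k), if 2*k < b ∧ cF k G b < dF k G (2*k) then (1:ℕ) else 0) = 0 :=
    Finset.sum_eq_zero fun b hb => by rw [mem_range] at hb; rw [if_neg]; omega
  have hmain : (∑ a ∈ range (2*k), ∑ b ∈ range (2*k), if a < b ∧ cF k G b < dF k G a then (1:ℕ) else 0)
      = k*(2*k-1) := by
    have e : (∑ a ∈ range (2*k), ∑ b ∈ range (2*k), if a < b ∧ cF k G b < dF k G a then (1:ℕ) else 0)
        = ∑ a ∈ range (2*k), ∑ b ∈ range (2*k), if a < b then (1:ℕ) else 0 := by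
      refine Finset.sum_congr rfl fun a ha => Finset.sum_congr rfl fun b hb => ?_
      rw [mem_range] at ha hb
      refine if_congr (and_iff_left ?_) rfl rfl
      rw [cF_lt b hb]
      have := hG b hb
      have := dF_ge hk hG (G := G) a
      omega
    rw [e]
    have h1 := gaussPairs (2*k)
    have h2 : 2*k*(2*k-1) = 2*(k*(2*k-1)) := by ring
    omega
  have hsecond : (∑ a ∈ range (2*k), if a < 2*k ∧ cF k G (2*k) < dF k G a then (1:ℕ) else 0)
      = 1 + ∑ u ∈ range (2*k-1), if G u < G (2*k-1) then 1 else 0 := by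
    obtain ⟨M, hM⟩ : ∃ M, 2*k = M+1 := ⟨2*k-1, by omega⟩
    have key : ∀ a ∈ range (2*k), (if a < 2*k ∧ cF k G (2*k) < dF k G a then (1:ℕ) else 0)
        = if cF k G (2*k) < dF k G a then 1 else 0 := fun a ha =>
      if_congr (and_iff_right (mem_range.mp ha)) rfl rfl
    rw [Finset.sum_congr rfl key]
    rw [show range (2*k) = range (M+1) from by rw [hM]]
    rw [Finset.sum_range_succ']
    have hzero : (if cF k G (2*k) < dF k G 0 then (1:ℕ) else 0) = 1 := by
      rw [if_pos]
      rw [dF_zero]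
      have := cF_le hk hG (i := 2*k)
      omega
    have hterm : ∀ u ∈ range M, (if cF k G (2*k) < dF k G (u+1) then (1:ℕ) else 0)
        = if G u < G (2*k-1) then 1 else 0 := by
      intro u hu
      rw [mem_range] at hu
      rw [cF_top, dF_mid (u+1) (by omega) (by omega)]
      refine if_congr ?_ rfl rfl
      have := hG u (by omega)
      have := hG (2*k-1) (by omega)
      simp only [Nat.add_sub_cancel]
      omega
    rw [Finset.sum_congr rfl hterm, hzero]
    rw [show M = 2*k-1 from by omega]
    omega
  rw [hmain, h2, hsecond, if_neg (by omega : ¬(2*k < 2*k ∧ cF k G (2*k) < dF k G (2*k)))]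
  omega

private lemma S4lem (k : ℕ) (hk : 1 ≤ k) (G : ℕ → ℕ) (hG : ∀ i, i < 2*k → G i < k) :
    (∑ a ∈ range (2*k+1), ∑ b ∈ range (2*k+1), if a < b ∧ dF k G b < dF k G a then (1:ℕ) else 0)
      = (∑ u ∈ range (2*k), ∑ v ∈ range (2*k-1), if u < v ∧ G u < G v then 1 else 0) + (2*k-1) := by
  simp only [Finset.sum_range_succ]
  rw [Finset.sum_add_distrib]
  have h1 : (∑ a ∈ range (2*k), if a < 2*k ∧ dF k G (2*k) < dF k G a then (1:ℕ) else 0) = 0 := by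
    refine Finset.sum_eq_zero fun a ha => ?_
    rw [if_neg]
    rintro ⟨-, hlt⟩
    rw [dF_top hk] at hlt
    have := dF_le (k := k) (G := G) a
    omega
  have h2 : (∑ b ∈ range (2*k), if 2*k < b ∧ dF k G b < dF k G (2*k) then (1:ℕ) else 0) = 0 :=
    Finset.sum_eq_zero fun b hb => by rw [mem_range] at hb; rw [if_neg]; omega
  rw [h1, h2, if_neg (by omega : ¬(2*k < 2*k ∧ dF k G (2*k) < dF k G (2*k)))]
  simp only [add_zero]
  obtain ⟨M, hM⟩ : ∃ M, 2*k = M+1 := ⟨2*k-1, by omega⟩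
  have hMlt : M < 2*k := by omega
  rw [show range (2*k) = range (M+1) from by rw [hM]]
  rw [Finset.sum_range_succ' (fun a => ∑ b ∈ range (M+1), if a < b ∧ dF k G b < dF k G a then (1:ℕ) else 0) M]
  -- F 0 = M
  have hF0 : (∑ b ∈ range (M+1), if 0 < b ∧ dF k G b < dF k G 0 then (1:ℕ) else 0) = M := by
    rw [Finset.sum_range_succ' (fun b => if 0 < b ∧ dF k G b < dF k G 0 then (1:ℕ) else 0) M]
    have e : ∀ v ∈ range M, (if 0 < v+1 ∧ dF k G (v+1) < dF k G 0 then (1:ℕ) else 0) = 1 := by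
      intro v hv
      rw [mem_range] at hv
      rw [if_pos]
      refine ⟨by omega, ?_⟩
      rw [dF_zero, dF_mid (v+1) (by omega) (by omega)]
      omega
    rw [Finset.sum_congr rfl e, if_neg (by omega : ¬(0 < 0 ∧ dF k G 0 < dF k G 0))]
    simp
  rw [hF0]
  -- shifted main part
  have hshift : ∀ u ∈ range M,
      (∑ b ∈ range (M+1), if u+1 < b ∧ dF k G b < dF k G (u+1) then (1:ℕ) else 0)
        = ∑ v ∈ range M, if u < v ∧ G u < G v then 1 else 0 := by
    intro u hu
    rw [mem_range] at hu
    rw [Finset.sum_range_succ' (fun b => if u+1 < b ∧ dF k G b < dF k G (u+1) then (1:ℕ) else 0) M]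
    rw [if_neg (by omega : ¬(u+1 < 0 ∧ dF k G 0 < dF k G (u+1))), add_zero]
    refine Finset.sum_congr rfl fun v hv => ?_
    rw [mem_range] at hv
    rw [dF_mid (v+1) (by omega) (by omega), dF_mid (u+1) (by omega) (by omega)]
    simp only [Nat.add_sub_cancel]
    have := hG u (by omega)
    have := hG v (by omega)
    refine if_congr ?_ rfl rfl
    omega
  rw [Finset.sum_congr rfl hshift]
  -- compare with target: u-range M+1 vs M
  have htail : (∑ u ∈ range (M+1), ∑ v ∈ range (2*k-1), if u < v ∧ G u < G v then (1:ℕ) else 0)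
      = ∑ u ∈ range M, ∑ v ∈ range M, if u < v ∧ G u < G v then 1 else 0 := by
    rw [Finset.sum_range_succ]
    have : (∑ v ∈ range (2*k-1), if M < v ∧ G M < G v then (1:ℕ) else 0) = 0 :=
      Finset.sum_eq_zero fun v hv => by rw [mem_range] at hv; rw [if_neg]; omega
    rw [this, add_zero]
    refine Finset.sum_congr rfl fun u _ => ?_
    rw [show 2*k-1 = M from by omega]
  rw [htail, show 2*k-1 = M from by omega]

private lemma Qsplit (k : ℕ) (hk : 1 ≤ k) (G : ℕ → ℕ) :
    (∑ u ∈ range (2*k), ∑ v ∈ range (2*k), if u < v ∧ G u < G v then (1:ℕ) else 0)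
      = (∑ u ∈ range (2*k), ∑ v ∈ range (2*k-1), if u < v ∧ G u < G v then 1 else 0)
        + ∑ u ∈ range (2*k-1), if G u < G (2*k-1) then 1 else 0 := by
  obtain ⟨M, hM⟩ : ∃ M, 2*k = M+1 := ⟨2*k-1, by omega⟩
  have e : ∀ u ∈ range (2*k), (∑ v ∈ range (2*k), if u < v ∧ G u < G v then (1:ℕ) else 0)
      = (∑ v ∈ range (2*k-1), if u < v ∧ G u < G v then 1 else 0)
        + if u < 2*k-1 ∧ G u < G (2*k-1) then 1 else 0 := by
    intro u _
    rw [show range (2*k) = range (M+1) from by rw [hM], Finset.sum_range_succ,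
      show M = 2*k-1 from by omega]
  rw [Finset.sum_congr rfl e, Finset.sum_add_distrib]
  congr 1
  exact shrink (by omega) _

private lemma count_main (k : ℕ) (hk : 1 ≤ k) (G : ℕ → ℕ)
    (hG : ∀ i, i < 2*k → G i < k)
    (hfib : ∀ w, w < k → (∑ i ∈ range (2*k), if G i = w then 1 else 0) = 2) :
    (∑ a ∈ range (2*k+1), ∑ b ∈ range (2*k+1),
        (((if a < b ∧ cF k G b < cF k G a then 1 else 0) + (if a < b ∧ dF k G b < cF k G a then 1 else 0))
        + ((if a < b ∧ cF k G b < dF k G a then 1 else 0) + (if a < b ∧ dF k G b < dF k G a then (1:ℕ) else 0))))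
      = k * (4*k - 1) := by
  simp only [Finset.sum_add_distrib]
  rw [S1lem k hk G hG, S2lem k hk G hG, S3lem k hk G hG, S4lem k hk G hG]
  have hQ := Qsplit k hk G
  have hE := Efib k G hG hfib
  have hPQE := PQE k G
  have hg := gaussPairs (2*k)
  have c1 : 2*k*(2*k-1) = 2*(k*(2*k-1)) := by ring
  have c3 : k*(4*k-1) = 2*(k*(2*k-1)) + k := by
    rw [show 4*k-1 = 2*(2*k-1)+1 from by omega]; ring
  omega

private lemma col_count (k : ℕ) (hk : 1 ≤ k) (G : ℕ → ℕ)
    (hG : ∀ i, i < 2*k → G i < k)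
    (hfib : ∀ w, w < k → (∑ i ∈ range (2*k), if G i = w then 1 else 0) = 2) :
    ∀ v, v < 2*k+1 → (∑ i ∈ range (2*k+1),
      ((if v = cF k G i then (1:ℕ) else 0) + (if v = dF k G i then 1 else 0))) = 2 := by
  intro v hv
  rw [Finset.sum_range_succ]
  by_cases hv1 : v < k
  · -- v < k
    have e : ∀ i ∈ range (2*k), ((if v = cF k G i then (1:ℕ) else 0)
        + (if v = dF k G i then 1 else 0)) = if G i = v then 1 else 0 := by
      intro i hi
      rw [mem_range] at hi
      rw [cF_lt i hi, if_neg (show ¬ v = dF k G i from by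
        have := dF_ge hk hG (G := G) i; omega), add_zero]
      exact if_congr eq_comm rfl rfl
    rw [Finset.sum_congr rfl e, hfib v hv1,
      if_neg (show ¬ v = cF k G (2*k) from by have := cF_top_ge hk hG; omega),
      if_neg (show ¬ v = dF k G (2*k) from by rw [dF_top hk]; omega)]
  · by_cases hv2 : v < 2*k
    · -- k ≤ v < 2k
      obtain ⟨M, hM⟩ : ∃ M, 2*k = M+1 := ⟨2*k-1, by omega⟩
      have htop : ((if v = cF k G (2*k) then (1:ℕ) else 0) + (if v = dF k G (2*k) then 1 else 0))
          = if G M = 2*k-1-v then 1 else 0 := by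
        rw [cF_top, if_neg (show ¬ v = dF k G (2*k) from by rw [dF_top hk]; omega), add_zero,
          show (2*k-1 : ℕ) = M from by omega]
        have := hG M (by omega)
        exact if_congr (by omega) rfl rfl
      rw [htop, show range (2*k) = range (M+1) from by rw [hM], Finset.sum_range_succ']
      have h0 : ((if v = cF k G 0 then (1:ℕ) else 0) + (if v = dF k G 0 then 1 else 0)) = 0 := by
        rw [cF_lt 0 (by omega), dF_zero,
          if_neg (show ¬ v = G 0 from by have := hG 0 (by omega); omega),
          if_neg (by omega)]
      have e : ∀ u ∈ range M, ((if v = cF k G (u+1) then (1:ℕ) else 0)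
          + (if v = dF k G (u+1) then 1 else 0)) = if G u = 2*k-1-v then 1 else 0 := by
        intro u hu
        rw [mem_range] at hu
        rw [cF_lt (u+1) (by omega), dF_mid (u+1) (by omega) (by omega),
          if_neg (show ¬ v = G (u+1) from by have := hG (u+1) (by omega); omega),
          Nat.add_sub_cancel, zero_add]
        have := hG u (by omega)
        exact if_congr (by omega) rfl rfl
      rw [Finset.sum_congr rfl e, h0, add_zero]
      have hf := hfib (2*k-1-v) (by omega)
      rw [show range (2*k) = range (M+1) from by rw [hM], Finset.sum_range_succ] at hf
      omega
    · -- v = 2k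
      have hv3 : v = 2*k := by omega
      obtain ⟨M, hM⟩ : ∃ M, 2*k = M+1 := ⟨2*k-1, by omega⟩
      have htop : ((if v = cF k G (2*k) then (1:ℕ) else 0) + (if v = dF k G (2*k) then 1 else 0)) = 1 := by
        rw [if_neg (show ¬ v = cF k G (2*k) from by have := cF_le hk hG (i := 2*k); omega),
          dF_top hk, if_pos hv3, zero_add]
      have e : ∀ i ∈ range (2*k), ((if v = cF k G i then (1:ℕ) else 0)
          + (if v = dF k G i then 1 else 0)) = if i = 0 then 1 else 0 := by
        intro i hi
        rw [mem_range] at hi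
        rw [if_neg (show ¬ v = cF k G i from by have := cF_le hk hG (i := i); omega)]
        rcases Nat.eq_zero_or_pos i with h | h
        · subst h
          rw [dF_zero, if_pos hv3, if_pos rfl]
        · rw [dF_mid i (by omega) hi, if_neg (by omega), if_neg (by omega)]
      rw [Finset.sum_congr rfl e, htop]
      rw [show range (2*k) = range (M+1) from by rw [hM], Finset.sum_range_succ']
      simp


private lemma masterA (k : ℕ) (hk : 1 ≤ k) (G : ℕ → ℕ) (hG : ∀ i, i < 2*k → G i < k)
    (C : Matrix (Fin (2*k)) (Fin k) ℕ)
    (hCite : ∀ (a b : ℕ) (ha : a < 2*k) (hb : b < k),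
      C ⟨a, ha⟩ ⟨b, hb⟩ = if b = G a then 1 else 0)
    (A : Matrix (Fin (2*k+1)) (Fin (2*k+1)) ℕ)
    (hTL : ∀ (i j : ℕ) (hi : i < 2*k) (hj : j < k),
        A ⟨i, by linarith⟩ ⟨j, by linarith⟩ = C ⟨i, hi⟩ ⟨j, hj⟩)
    (hBR : ∀ (i j : ℕ) (hi : i < 2*k) (hj : j < k),
        A ⟨i+1, by linarith⟩ ⟨k+j, by linarith⟩ = C ⟨i, hi⟩ ⟨k-1-j, Nat.lt_of_le_of_lt (Nat.sub_le _ _) (Nat.sub_lt hk Nat.one_pos)⟩)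
      (h1n : A ⟨0, Nat.succ_pos _⟩ ⟨2*k, Nat.lt_succ_self _⟩ = 1)
      (hnn : A ⟨2*k, Nat.lt_succ_self _⟩ ⟨2*k, Nat.lt_succ_self _⟩ = 1)
    (h0 : ∀ i j : Fin (2*k+1),
      ¬(i.1 < 2*k ∧ j.1 < k) → ¬(1 ≤ i.1 ∧ k ≤ j.1 ∧ j.1 < 2*k) →
      ¬(i.1 = 0 ∧ j.1 = 2*k) → ¬(i.1 = 2*k ∧ j.1 = 2*k) → A i j = 0) :
    ∀ (i j : Fin (2*k+1)), A i j =
      (if (j:ℕ) = cF k G (i:ℕ) then 1 else 0) + (if (j:ℕ) = dF k G (i:ℕ) then 1 else 0) := by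
  intro i j
  have hi : (i:ℕ) < 2*k+1 := i.isLt
  have hj : (j:ℕ) < 2*k+1 := j.isLt
  by_cases hjk : (j:ℕ) < k
  · rw [if_neg (show ¬ (j:ℕ) = dF k G (i:ℕ) from by
      have := dF_ge hk hG (G := G) (i:ℕ); omega), add_zero]
    by_cases hik : (i:ℕ) < 2*k
    · have h : A i j = C ⟨i.1, hik⟩ ⟨j.1, hjk⟩ := hTL i.1 j.1 hik hjk
      rw [h, hCite i.1 j.1 hik hjk, cF_lt (i:ℕ) hik]
    · have hieq : (i:ℕ) = 2*k := by omega
      rw [h0 i j (by omega) (by omega) (by omega) (by omega)]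
      rw [if_neg (show ¬ (j:ℕ) = cF k G (i:ℕ) from by
        rw [hieq]
        have := cF_top_ge hk hG (G := G)
        omega)]
  · by_cases hj2 : (j:ℕ) < 2*k
    · -- k ≤ j < 2k
      by_cases hi0 : (i:ℕ) = 0
      · rw [h0 i j (by omega) (by omega) (by omega) (by omega)]
        rw [if_neg (show ¬ (j:ℕ) = cF k G (i:ℕ) from by
          rw [hi0, cF_lt 0 (by omega)]
          have := hG 0 (by omega)
          omega)]
        rw [if_neg (show ¬ (j:ℕ) = dF k G (i:ℕ) from by rw [hi0, dF_zero]; omega)]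
      · obtain ⟨a, ha⟩ : ∃ a, (i:ℕ) = a+1 := ⟨i.1-1, by omega⟩
        obtain ⟨b, hb1, hb2⟩ : ∃ b, (j:ℕ) = k+b ∧ b < k := ⟨j.1-k, by omega, by omega⟩
        have hak : a < 2*k := by omega
        have h : A i j = C ⟨a, hak⟩ ⟨k-1-b, by omega⟩ := by
          have h' := hBR a b hak hb2
          rw [show (⟨a+1, by omega⟩ : Fin (2*k+1)) = i from Fin.ext ha.symm,
            show (⟨k+b, by omega⟩ : Fin (2*k+1)) = j from Fin.ext hb1.symm] at h'
          exact h'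
        rw [h, hCite a (k-1-b) hak (by omega), ha, hb1]
        have hGa := hG a hak
        by_cases hitop : a+1 < 2*k
        · rw [if_neg (show ¬ k+b = cF k G (a+1) from by
            rw [cF_lt (a+1) hitop]
            have := hG (a+1) hitop
            omega), zero_add]
          rw [dF_mid (a+1) (by omega) hitop, Nat.add_sub_cancel]
          exact if_congr (by omega) rfl rfl
        · have hieq : a+1 = 2*k := by omega
          rw [if_neg (show ¬ k+b = dF k G (a+1) from by rw [hieq, dF_top hk]; omega), add_zero]
          rw [hieq, cF_top, show a = 2*k-1 from by omega]
          have h1 := hG (2*k-1) (by omega)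
          exact if_congr (by omega) rfl rfl
    · -- j = 2k
      have hjeq : (j:ℕ) = 2*k := by omega
      rw [if_neg (show ¬ (j:ℕ) = cF k G (i:ℕ) from by
        have := cF_le hk hG (G := G) (i := (i:ℕ)); omega), zero_add]
      by_cases hi0 : (i:ℕ) = 0
      · have e1 : A i j = 1 := by
          rw [show i = ⟨0, by omega⟩ from Fin.ext hi0,
            show j = ⟨2*k, by omega⟩ from Fin.ext hjeq]
          exact h1n
        rw [e1, if_pos (show (j:ℕ) = dF k G (i:ℕ) from by rw [hi0, hjeq, dF_zero])]
      · by_cases hi2 : (i:ℕ) = 2*k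
        · have e1 : A i j = 1 := by
            rw [show i = ⟨2*k, by omega⟩ from Fin.ext hi2,
              show j = ⟨2*k, by omega⟩ from Fin.ext hjeq]
            exact hnn
          rw [e1, if_pos (show (j:ℕ) = dF k G (i:ℕ) from by rw [hi2, hjeq, dF_top hk])]
        · rw [h0 i j (by omega) (by omega) (by omega) (by omega)]
          rw [if_neg (show ¬ (j:ℕ) = dF k G (i:ℕ) from by
            rw [dF_mid (i:ℕ) (by omega) (by omega)]
            have := hG (i.1-1) (by omega)
            omega)]

/-- Let `k ≥ 1`, `n = 2k+1`, and let `C` be a `2k × k`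
(0,1)-matrix with all row sums `1` and all column sums `2`. If `A` is the
`n × n` matrix whose top-left `2k × k` block is `C`, whose block on rows
`2,…,2k+1` and columns `k+1,…,2k` is the conjugate `C*`, whose `(1,n)`- and
`(n,n)`-entries are `1`, and all of whose other entries are `0`, then
`A ∈ A(n,2)` and `ν(A) = k(4k−1)`.  (Indices inside are 0-based.) -/
theorem ac_odd_construction (k : ℕ) (hk : 1 ≤ k)
    (C : Matrix (Fin (2*k)) (Fin k) ℕ) (hC : ZeroOne C)
    (hCrow : ∀ i, rowSum C i = 1) (hCcol : ∀ j, colSum C j = 2)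
    (A : Matrix (Fin (2*k+1)) (Fin (2*k+1)) ℕ)
    (hTL : ∀ (i j : ℕ) (hi : i < 2*k) (hj : j < k),
      A ⟨i, by omega⟩ ⟨j, by omega⟩ = C ⟨i, hi⟩ ⟨j, hj⟩)
    (hBR : ∀ (i j : ℕ) (hi : i < 2*k) (hj : j < k),
      A ⟨i+1, by omega⟩ ⟨k+j, by omega⟩ = C ⟨i, hi⟩ ⟨k-1-j, by omega⟩)
    (h1n : A ⟨0, by omega⟩ ⟨2*k, by omega⟩ = 1)
    (hnn : A ⟨2*k, by omega⟩ ⟨2*k, by omega⟩ = 1)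
    (h0 : ∀ i j : Fin (2*k+1),
      ¬(i.1 < 2*k ∧ j.1 < k) → ¬(1 ≤ i.1 ∧ k ≤ j.1 ∧ j.1 < 2*k) →
      ¬(i.1 = 0 ∧ j.1 = 2*k) → ¬(i.1 = 2*k ∧ j.1 = 2*k) → A i j = 0) :
    A ∈ classA (2*k+1) 2 ∧ nu A = k*(4*k-1) := by
  -- choose the unique 1 in each row of C
  have hexu : ∀ i : Fin (2*k), ∃ j : Fin k, C i j = 1 ∧ ∀ y : Fin k, C i y = 1 → y = j := by
    intro i
    have hrow := hCrow i
    unfold rowSum at hrow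
    have hex : ∃ j : Fin k, C i j = 1 := by
      by_contra h
      push_neg at h
      have hz : ∀ j : Fin k, C i j = 0 := fun j => (hC i j).resolve_right (h j)
      rw [Finset.sum_congr rfl (fun j _ => hz j)] at hrow
      simp at hrow
    obtain ⟨j, hj⟩ := hex
    refine ⟨j, hj, ?_⟩
    intro y hy
    by_contra hne
    have h2 : (2:ℕ) ≤ ∑ x : Fin k, C i x := by
      calc (2:ℕ) = ∑ x ∈ ({y, j} : Finset (Fin k)), C i x := by
            rw [Finset.sum_pair hne, hy, hj]
        _ ≤ _ := Finset.sum_le_sum_of_subset (Finset.subset_univ _)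
    omega
  choose f hf1 hf2 using hexu
  set G : ℕ → ℕ := fun i => if h : i < 2*k then ((f ⟨i, h⟩ : Fin k) : ℕ) else 0 with hGdef
  have hGval : ∀ (i : ℕ) (h : i < 2*k), G i = ((f ⟨i, h⟩ : Fin k) : ℕ) := by
    intro i h
    rw [hGdef]
    exact dif_pos h
  have hG : ∀ i, i < 2*k → G i < k := by
    intro i hi
    rw [hGval i hi]
    exact (f ⟨i, hi⟩).isLt
  have hCite : ∀ (a b : ℕ) (ha : a < 2*k) (hb : b < k),
      C ⟨a, ha⟩ ⟨b, hb⟩ = if b = G a then 1 else 0 := by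
    intro a b ha hb
    by_cases h : b = G a
    · rw [if_pos h]
      have he : (⟨b, hb⟩ : Fin k) = f ⟨a, ha⟩ := by
        apply Fin.ext
        rw [hGval a ha] at h
        exact h
      rw [he]
      exact hf1 _
    · rw [if_neg h]
      rcases hC ⟨a, ha⟩ ⟨b, hb⟩ with h0' | h1'
      · exact h0'
      · exact absurd (by rw [hGval a ha]; exact congrArg Fin.val (hf2 _ _ h1')) h
  have hfib : ∀ w, w < k → (∑ i ∈ Finset.range (2*k), if G i = w then 1 else 0) = 2 := by
    intro w hw
    have hcol := hCcol ⟨w, hw⟩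
    unfold colSum at hcol
    have e : ∀ i : Fin (2*k), C i ⟨w, hw⟩ = if G (i:ℕ) = w then 1 else 0 := by
      intro i
      have h : C i ⟨w, hw⟩ = if (w:ℕ) = G (i:ℕ) then 1 else 0 := hCite i.1 w i.isLt hw
      rw [h]
      exact if_congr eq_comm rfl rfl
    rw [Finset.sum_congr rfl (fun i _ => e i)] at hcol
    calc (∑ i ∈ Finset.range (2*k), if G i = w then 1 else 0)
        = ∑ i : Fin (2*k), if G (i:ℕ) = w then 1 else 0 :=
          (Fin.sum_univ_eq_sum_range (fun i => if G i = w then 1 else 0) (2*k)).symm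
      _ = 2 := hcol
  have hA : ∀ (i j : Fin (2*k+1)), A i j =
      (if (j:ℕ) = cF k G (i:ℕ) then 1 else 0) + (if (j:ℕ) = dF k G (i:ℕ) then 1 else 0) :=
    masterA k hk G hG C hCite A hTL hBR h1n hnn h0
  constructor
  · -- membership in A(n,2)
    refine ⟨?_, ?_, ?_⟩
    · intro i j
      rw [hA i j]
      have := cF_lt_dF hk hG (G := G) (i := (i:ℕ))
      split_ifs <;> omega
    · intro i
      unfold rowSum
      rw [Finset.sum_congr rfl (fun j _ => hA i j), Finset.sum_add_distrib,
        pick1 (cF k G (i:ℕ)) (by have := cF_le hk hG (G := G) (i := (i:ℕ)); omega),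
        pick1 (dF k G (i:ℕ)) (by have := dF_le (k := k) (G := G) (i:ℕ); omega)]
    · intro j
      unfold colSum
      rw [Finset.sum_congr rfl (fun i _ => hA i j),
        Fin.sum_univ_eq_sum_range (fun a =>
          (if (j:ℕ) = cF k G a then (1:ℕ) else 0) + (if (j:ℕ) = dF k G a then 1 else 0)) (2*k+1)]
      exact col_count k hk G hG hfib (j:ℕ) j.isLt
  · -- the inversion count
    have hA1 : ∀ (i j : Fin (2*k+1)),
        (A i j = 1) ↔ ((j:ℕ) = cF k G (i:ℕ) ∨ (j:ℕ) = dF k G (i:ℕ)) := by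
      intro i j
      rw [hA i j]
      have hne := cF_lt_dF hk hG (G := G) (i := (i:ℕ))
      by_cases h1 : (j:ℕ) = cF k G (i:ℕ) <;> by_cases h2 : (j:ℕ) = dF k G (i:ℕ)
      · omega
      · simp only [h1, h2]
        simp
        omega
      · simp only [h2]
        simp [h1]
        omega
      · simp [h1, h2]
    have key : ∀ (i1 j1 i2 j2 : Fin (2*k+1)),
        (if i1 < i2 ∧ j2 < j1 ∧ A i1 j1 = 1 ∧ A i2 j2 = 1 then (1:ℕ) else 0)
        = (((if (i1:ℕ) < (i2:ℕ) ∧ (j2:ℕ) < (j1:ℕ) ∧ (j1:ℕ) = cF k G (i1:ℕ) ∧ (j2:ℕ) = cF k G (i2:ℕ) then 1 else 0)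
          + (if (i1:ℕ) < (i2:ℕ) ∧ (j2:ℕ) < (j1:ℕ) ∧ (j1:ℕ) = cF k G (i1:ℕ) ∧ (j2:ℕ) = dF k G (i2:ℕ) then 1 else 0))
          + ((if (i1:ℕ) < (i2:ℕ) ∧ (j2:ℕ) < (j1:ℕ) ∧ (j1:ℕ) = dF k G (i1:ℕ) ∧ (j2:ℕ) = cF k G (i2:ℕ) then 1 else 0)
          + (if (i1:ℕ) < (i2:ℕ) ∧ (j2:ℕ) < (j1:ℕ) ∧ (j1:ℕ) = dF k G (i1:ℕ) ∧ (j2:ℕ) = dF k G (i2:ℕ) then 1 else 0))) := by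
      intro i1 j1 i2 j2
      have e : (i1 < i2 ∧ j2 < j1 ∧ A i1 j1 = 1 ∧ A i2 j2 = 1) ↔
          ((i1:ℕ) < (i2:ℕ) ∧ (j2:ℕ) < (j1:ℕ)
            ∧ ((j1:ℕ) = cF k G (i1:ℕ) ∨ (j1:ℕ) = dF k G (i1:ℕ))
            ∧ ((j2:ℕ) = cF k G (i2:ℕ) ∨ (j2:ℕ) = dF k G (i2:ℕ))) := by
        rw [Fin.lt_def, Fin.lt_def, hA1 i1 j1, hA1 i2 j2]
      rw [if_congr e rfl rfl]
      refine ite_split4 _ _ _ _ _ _ ?_ ?_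
      · have := cF_lt_dF hk hG (G := G) (i := (i1:ℕ)); omega
      · have := cF_lt_dF hk hG (G := G) (i := (i2:ℕ)); omega
    have step0 : nu A = ∑ i1 : Fin (2*k+1), ∑ j1 : Fin (2*k+1), ∑ i2 : Fin (2*k+1), ∑ j2 : Fin (2*k+1),
        if i1 < i2 ∧ j2 < j1 ∧ A i1 j1 = 1 ∧ A i2 j2 = 1 then (1:ℕ) else 0 := by
      unfold nu
      rw [Finset.card_filter]
      simp only [Fintype.sum_prod_type]
    rw [step0]
    have step1 : (∑ i1 : Fin (2*k+1), ∑ j1 : Fin (2*k+1), ∑ i2 : Fin (2*k+1), ∑ j2 : Fin (2*k+1),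
        if i1 < i2 ∧ j2 < j1 ∧ A i1 j1 = 1 ∧ A i2 j2 = 1 then (1:ℕ) else 0)
        = ∑ i1 : Fin (2*k+1), ∑ i2 : Fin (2*k+1),
          (((if (i1:ℕ) < (i2:ℕ) ∧ cF k G (i2:ℕ) < cF k G (i1:ℕ) then 1 else 0)
            + (if (i1:ℕ) < (i2:ℕ) ∧ dF k G (i2:ℕ) < cF k G (i1:ℕ) then 1 else 0))
          + ((if (i1:ℕ) < (i2:ℕ) ∧ cF k G (i2:ℕ) < dF k G (i1:ℕ) then 1 else 0)
            + (if (i1:ℕ) < (i2:ℕ) ∧ dF k G (i2:ℕ) < dF k G (i1:ℕ) then 1 else 0))) := by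
      refine Finset.sum_congr rfl fun i1 _ => ?_
      rw [Finset.sum_comm]
      refine Finset.sum_congr rfl fun i2 _ => ?_
      rw [Finset.sum_congr rfl fun j1 _ => Finset.sum_congr rfl fun j2 _ => key i1 j1 i2 j2]
      have hc1 : cF k G (i1:ℕ) < 2*k+1 := by have := cF_le hk hG (G := G) (i := (i1:ℕ)); omega
      have hc2 : cF k G (i2:ℕ) < 2*k+1 := by have := cF_le hk hG (G := G) (i := (i2:ℕ)); omega
      have hd1 : dF k G (i1:ℕ) < 2*k+1 := by have := dF_le (k := k) (G := G) (i1:ℕ); omega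
      have hd2 : dF k G (i2:ℕ) < 2*k+1 := by have := dF_le (k := k) (G := G) (i2:ℕ); omega
      simp only [Finset.sum_add_distrib]
      rw [pick2 ((i1:ℕ) < (i2:ℕ)) (cF k G (i1:ℕ)) (cF k G (i2:ℕ)) hc1 hc2,
        pick2 ((i1:ℕ) < (i2:ℕ)) (cF k G (i1:ℕ)) (dF k G (i2:ℕ)) hc1 hd2,
        pick2 ((i1:ℕ) < (i2:ℕ)) (dF k G (i1:ℕ)) (cF k G (i2:ℕ)) hd1 hc2,
        pick2 ((i1:ℕ) < (i2:ℕ)) (dF k G (i1:ℕ)) (dF k G (i2:ℕ)) hd1 hd2]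
    rw [step1]
    rw [fin2range (2*k+1) (fun a b =>
      (((if a < b ∧ cF k G b < cF k G a then 1 else 0)
        + (if a < b ∧ dF k G b < cF k G a then 1 else 0))
      + ((if a < b ∧ cF k G b < dF k G a then 1 else 0)
        + (if a < b ∧ dF k G b < dF k G a then 1 else 0))))]
    exact count_main k hk G hG hfib
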